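/- Under the substitution Z₁ ↦ θ_{01}(z)θ_{01}(w), Z₂ ↦ θ_{00}(z)θ_{00}(w), Z₃ ↦ θ_{10}(z)θ_{10}(w), C ↦ θ_{00}(2z)θ_{00}(2w)+θ_{10}(2z)θ_{10}(2w), W₁ ↦ θ_{10}(2z)θ_{00}(2w)+θ_{00}(2z)θ_{10}(2w), W₂ ↦ i(θ_{10}(2z)θ_{00}(2w)−θ_{00}(2z)θ_{10}(2w)), W₃ ↦ θ_{00}(2z)θ_{00}(2w)−θ_{10}(2z)θ_{10}(2w), the four box-variety relations W₁²+W₂² = Z₃², W₁²+W₃² = Z₂², W₂²+W₃² = Z₁², W₁²+W₂²+W₃² = C² hold identically for all z, w in the upper half-plane. -/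

import Mathlib

open Complex

section aux
open Real

/-- Auxiliary: generic theta-type summand. -/
noncomputable def thetaTerm (c : ℝ) (z : ℂ) (n : ℤ) : ℂ := cexp (π * I * ((n : ℂ) + c) ^ 2 * z)

lemma norm_thetaTerm (c : ℝ) (z : ℂ) (n : ℤ) :
    ‖thetaTerm c z n‖ = rexp (-(π * ((n : ℝ) + c) ^ 2) * z.im) := by
  rw [thetaTerm, Complex.norm_exp,
    show (π * I * ((n : ℂ) + c) ^ 2 * z) = ((π * ((n : ℝ) + c) ^ 2 : ℝ) : ℂ) * (z * I) by
      push_cast; ring,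
    re_ofReal_mul, mul_I_re]
  ring_nf

lemma summable_norm_thetaTerm (c : ℝ) {z : ℂ} (hz : 0 < z.im) :
    Summable fun n : ℤ => ‖thetaTerm c z n‖ := by
  have h := summable_pow_mul_jacobiTheta₂_term_bound (z.im * |c|) hz 0
  simp only [pow_zero, one_mul] at h
  refine h.of_nonneg_of_le (fun n => norm_nonneg _) (fun n => ?_)
  rw [norm_thetaTerm, Real.exp_le_exp]
  have h1 : -(|c| * |(n : ℝ)|) ≤ c * n := by
    rw [← abs_mul]; exact neg_abs_le _
  push_cast [Int.cast_abs]
  have key : (0:ℝ) ≤ ((n:ℝ) + c) ^ 2 - ((n:ℝ) ^ 2 - 2 * |c| * |(n:ℝ)|) := by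
    nlinarith [sq_nonneg c]
  nlinarith [mul_nonneg (mul_nonneg pi_pos.le hz.le) key]

lemma split_sum {F : ℤ × ℤ → ℂ} (hF : Summable F) {e₁ e₂ : ℤ × ℤ → ℤ × ℤ}
    (h₁ : Function.Injective e₁) (h₂ : Function.Injective e₂)
    (hc : Set.range e₂ = (Set.range e₁)ᶜ) :
    ∑' p, F p = (∑' p, F (e₁ p)) + ∑' p, F (e₂ p) := by
  have s₁ : Summable (F ∘ e₁) := hF.comp_injective h₁
  have s₂ : Summable (F ∘ e₂) := hF.comp_injective h₂
  have H₁ : HasSum (F ∘ (↑) : Set.range e₁ → ℂ) (∑' p, F (e₁ p)) := by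
    rw [← (Equiv.ofInjective e₁ h₁).hasSum_iff]
    exact s₁.hasSum
  have H₂ : HasSum (F ∘ (↑) : ((Set.range e₁)ᶜ : Set (ℤ × ℤ)) → ℂ) (∑' p, F (e₂ p)) := by
    rw [← hc, ← (Equiv.ofInjective e₂ h₂).hasSum_iff]
    exact s₂.hasSum
  exact (H₁.add_compl H₂).tsum_eq

lemma injAux₁ : Function.Injective (fun p : ℤ×ℤ => (p.1+p.2, p.1-p.2)) := by
  intro ⟨a,b⟩ ⟨a',b'⟩ h; simp only [Prod.mk.injEq] at h ⊢; omega

lemma injAux₂ : Function.Injective (fun p : ℤ×ℤ => (p.1+p.2+1, p.1-p.2)) := by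
  intro ⟨a,b⟩ ⟨a',b'⟩ h; simp only [Prod.mk.injEq] at h ⊢; omega

lemma injAux₃ : Function.Injective (fun p : ℤ×ℤ => (p.1+p.2, p.1-p.2-1)) := by
  intro ⟨a,b⟩ ⟨a',b'⟩ h; simp only [Prod.mk.injEq] at h ⊢; omega

lemma complAux₁ : Set.range (fun p : ℤ×ℤ => (p.1+p.2+1, p.1-p.2))
    = (Set.range (fun p : ℤ×ℤ => (p.1+p.2, p.1-p.2)))ᶜ := by
  ext ⟨m,n⟩
  simp only [Set.mem_range, Set.mem_compl_iff, Prod.exists, Prod.mk.injEq]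
  constructor
  · rintro ⟨a,b,h1,h2⟩ ⟨a',b',h3,h4⟩; omega
  · intro h
    rcases Int.even_or_odd (m+n) with ⟨k,hk⟩|⟨k,hk⟩
    · exact absurd ⟨k, m-k, by omega, by omega⟩ h
    · exact ⟨k, m-k-1, by omega, by omega⟩

lemma complAux₂ : Set.range (fun p : ℤ×ℤ => (p.1+p.2, p.1-p.2-1))
    = (Set.range (fun p : ℤ×ℤ => (p.1+p.2, p.1-p.2)))ᶜ := by
  ext ⟨m,n⟩
  simp only [Set.mem_range, Set.mem_compl_iff, Prod.exists, Prod.mk.injEq]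
  constructor
  · rintro ⟨a,b,h1,h2⟩ ⟨a',b',h3,h4⟩; omega
  · intro h
    rcases Int.even_or_odd (m+n) with ⟨k,hk⟩|⟨k,hk⟩
    · exact absurd ⟨k, m-k, by omega, by omega⟩ h
    · exact ⟨k+1, m-k-1, by omega, by omega⟩

end aux

/-- The Jacobi theta constant `θ₀₀(z) = ∑_{n ∈ ℤ} exp(π i n² z)`. -/
noncomputable def theta00 (z : ℂ) : ℂ := ∑' n : ℤ, Complex.exp (Real.pi * I * n ^ 2 * z)

/-- The Jacobi theta constant `θ₁₀(z) = ∑_{n ∈ ℤ} exp(π i (n + 1/2)² z)`. -/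
noncomputable def theta10 (z : ℂ) : ℂ :=
  ∑' n : ℤ, Complex.exp (Real.pi * I * ((n : ℂ) + 1 / 2) ^ 2 * z)

/-- The Jacobi theta constant `θ₀₁(z) = ∑_{n ∈ ℤ} (-1)^n exp(π i n² z)`. -/
noncomputable def theta01 (z : ℂ) : ℂ :=
  ∑' n : ℤ, (-1 : ℂ) ^ n * Complex.exp (Real.pi * I * n ^ 2 * z)

section doubling
open Real

lemma theta00_eq (z : ℂ) : theta00 z = ∑' n : ℤ, thetaTerm 0 z n :=
  tsum_congr fun n => by simp [thetaTerm]

lemma theta10_eq (z : ℂ) : theta10 z = ∑' n : ℤ, thetaTerm (1/2) z n :=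
  tsum_congr fun n => congrArg cexp (by push_cast [thetaTerm]; ring)

lemma theta01_eq (z : ℂ) : theta01 z = ∑' n : ℤ, (-1:ℂ) ^ n * thetaTerm 0 z n :=
  tsum_congr fun n => by simp [thetaTerm]

lemma summable_norm_theta01_term {z : ℂ} (hz : 0 < z.im) :
    Summable fun n : ℤ => ‖(-1:ℂ) ^ n * thetaTerm 0 z n‖ := by
  refine (summable_norm_thetaTerm 0 hz).congr fun n => ?_
  rw [norm_mul, norm_zpow, norm_neg, norm_one, one_zpow, one_mul]

lemma im_two_mul {z : ℂ} (hz : 0 < z.im) : 0 < (2*z).im := by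
  have : (2*z).im = 2*z.im := by simp
  rw [this]; linarith

lemma theta00_sq {z : ℂ} (hz : 0 < z.im) :
    theta00 z ^ 2 = theta00 (2*z) ^ 2 + theta10 (2*z) ^ 2 := by
  have hz2 := im_two_mul hz
  have sn0 := summable_norm_thetaTerm 0 hz
  have sn0' := summable_norm_thetaTerm 0 hz2
  have snh' := summable_norm_thetaTerm (1/2) hz2
  calc theta00 z ^ 2 = (∑' n:ℤ, thetaTerm 0 z n) * (∑' n:ℤ, thetaTerm 0 z n) := by
        rw [theta00_eq, sq]
    _ = ∑' p : ℤ×ℤ, thetaTerm 0 z p.1 * thetaTerm 0 z p.2 :=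
        tsum_mul_tsum_of_summable_norm sn0 sn0
    _ = (∑' p : ℤ×ℤ, (fun q : ℤ×ℤ => thetaTerm 0 z q.1 * thetaTerm 0 z q.2) (p.1+p.2, p.1-p.2))
        + ∑' p : ℤ×ℤ, (fun q : ℤ×ℤ => thetaTerm 0 z q.1 * thetaTerm 0 z q.2) (p.1+p.2+1, p.1-p.2) :=
        split_sum (summable_mul_of_summable_norm sn0 sn0) injAux₁ injAux₂ complAux₁
    _ = (∑' p : ℤ×ℤ, thetaTerm 0 (2*z) p.1 * thetaTerm 0 (2*z) p.2)
        + ∑' p : ℤ×ℤ, thetaTerm (1/2) (2*z) p.1 * thetaTerm (1/2) (2*z) p.2 := by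
        congr 1 <;> refine tsum_congr fun p => ?_ <;>
          simp only [thetaTerm, ← Complex.exp_add] <;> exact congrArg cexp (by push_cast; ring)
    _ = theta00 (2*z) ^ 2 + theta10 (2*z) ^ 2 := by
        rw [theta00_eq, theta10_eq, sq, sq, tsum_mul_tsum_of_summable_norm sn0' sn0',
          tsum_mul_tsum_of_summable_norm snh' snh']

lemma theta01_sq {z : ℂ} (hz : 0 < z.im) :
    theta01 z ^ 2 = theta00 (2*z) ^ 2 - theta10 (2*z) ^ 2 := by
  have hz2 := im_two_mul hz
  have sn0 := summable_norm_theta01_term hz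
  have sn0' := summable_norm_thetaTerm 0 hz2
  have snh' := summable_norm_thetaTerm (1/2) hz2
  calc theta01 z ^ 2
      = (∑' n:ℤ, (-1:ℂ)^n * thetaTerm 0 z n) * (∑' n:ℤ, (-1:ℂ)^n * thetaTerm 0 z n) := by
        rw [theta01_eq, sq]
    _ = ∑' p : ℤ×ℤ, ((-1:ℂ)^p.1 * thetaTerm 0 z p.1) * ((-1:ℂ)^p.2 * thetaTerm 0 z p.2) :=
        tsum_mul_tsum_of_summable_norm sn0 sn0
    _ = (∑' p : ℤ×ℤ, (fun q : ℤ×ℤ => ((-1:ℂ)^q.1 * thetaTerm 0 z q.1) *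
            ((-1:ℂ)^q.2 * thetaTerm 0 z q.2)) (p.1+p.2, p.1-p.2))
        + ∑' p : ℤ×ℤ, (fun q : ℤ×ℤ => ((-1:ℂ)^q.1 * thetaTerm 0 z q.1) *
            ((-1:ℂ)^q.2 * thetaTerm 0 z q.2)) (p.1+p.2+1, p.1-p.2) :=
        split_sum (summable_mul_of_summable_norm sn0 sn0) injAux₁ injAux₂ complAux₁
    _ = (∑' p : ℤ×ℤ, thetaTerm 0 (2*z) p.1 * thetaTerm 0 (2*z) p.2)
        + ∑' p : ℤ×ℤ, -(thetaTerm (1/2) (2*z) p.1 * thetaTerm (1/2) (2*z) p.2) := by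
        congr 1
        · refine tsum_congr fun p => ?_
          have hsgn : ((-1:ℂ)^(p.1+p.2)) * ((-1:ℂ)^(p.1-p.2)) = 1 := by
            rw [← zpow_add₀ (by norm_num : (-1:ℂ) ≠ 0)]
            exact Even.neg_one_zpow ⟨p.1, by ring⟩
          have hexp : thetaTerm 0 z (p.1+p.2) * thetaTerm 0 z (p.1-p.2)
              = thetaTerm 0 (2*z) p.1 * thetaTerm 0 (2*z) p.2 := by
            simp only [thetaTerm, ← Complex.exp_add]
            exact congrArg cexp (by push_cast; ring)
          calc ((-1:ℂ)^(p.1+p.2) * thetaTerm 0 z (p.1+p.2)) *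
                ((-1:ℂ)^(p.1-p.2) * thetaTerm 0 z (p.1-p.2))
              = (((-1:ℂ)^(p.1+p.2)) * ((-1:ℂ)^(p.1-p.2))) *
                (thetaTerm 0 z (p.1+p.2) * thetaTerm 0 z (p.1-p.2)) := by ring
            _ = thetaTerm 0 (2*z) p.1 * thetaTerm 0 (2*z) p.2 := by
                rw [hsgn, one_mul, hexp]
        · refine tsum_congr fun p => ?_
          have hsgn : ((-1:ℂ)^(p.1+p.2+1)) * ((-1:ℂ)^(p.1-p.2)) = -1 := by
            rw [← zpow_add₀ (by norm_num : (-1:ℂ) ≠ 0)]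
            exact Odd.neg_one_zpow ⟨p.1, by ring⟩
          have hexp : thetaTerm 0 z (p.1+p.2+1) * thetaTerm 0 z (p.1-p.2)
              = thetaTerm (1/2) (2*z) p.1 * thetaTerm (1/2) (2*z) p.2 := by
            simp only [thetaTerm, ← Complex.exp_add]
            exact congrArg cexp (by push_cast; ring)
          calc ((-1:ℂ)^(p.1+p.2+1) * thetaTerm 0 z (p.1+p.2+1)) *
                ((-1:ℂ)^(p.1-p.2) * thetaTerm 0 z (p.1-p.2))
              = (((-1:ℂ)^(p.1+p.2+1)) * ((-1:ℂ)^(p.1-p.2))) *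
                (thetaTerm 0 z (p.1+p.2+1) * thetaTerm 0 z (p.1-p.2)) := by ring
            _ = -(thetaTerm (1/2) (2*z) p.1 * thetaTerm (1/2) (2*z) p.2) := by
                rw [hsgn, hexp]; ring
    _ = theta00 (2*z) ^ 2 - theta10 (2*z) ^ 2 := by
        rw [tsum_neg, theta00_eq, theta10_eq, sq, sq, tsum_mul_tsum_of_summable_norm sn0' sn0',
          tsum_mul_tsum_of_summable_norm snh' snh']
        ring

lemma theta10_sq {z : ℂ} (hz : 0 < z.im) :
    theta10 z ^ 2 = 2 * theta00 (2*z) * theta10 (2*z) := by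
  have hz2 := im_two_mul hz
  have snh := summable_norm_thetaTerm (1/2) hz
  have sn0' := summable_norm_thetaTerm 0 hz2
  have snh' := summable_norm_thetaTerm (1/2) hz2
  calc theta10 z ^ 2 = (∑' n:ℤ, thetaTerm (1/2) z n) * (∑' n:ℤ, thetaTerm (1/2) z n) := by
        rw [theta10_eq, sq]
    _ = ∑' p : ℤ×ℤ, thetaTerm (1/2) z p.1 * thetaTerm (1/2) z p.2 :=
        tsum_mul_tsum_of_summable_norm snh snh
    _ = (∑' p : ℤ×ℤ, (fun q : ℤ×ℤ => thetaTerm (1/2) z q.1 * thetaTerm (1/2) z q.2)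
            (p.1+p.2, p.1-p.2))
        + ∑' p : ℤ×ℤ, (fun q : ℤ×ℤ => thetaTerm (1/2) z q.1 * thetaTerm (1/2) z q.2)
            (p.1+p.2, p.1-p.2-1) :=
        split_sum (summable_mul_of_summable_norm snh snh) injAux₁ injAux₃ complAux₂
    _ = (∑' p : ℤ×ℤ, thetaTerm (1/2) (2*z) p.1 * thetaTerm 0 (2*z) p.2)
        + ∑' p : ℤ×ℤ, thetaTerm 0 (2*z) p.1 * thetaTerm (1/2) (2*z) p.2 := by
        congr 1 <;> refine tsum_congr fun p => ?_ <;>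
          simp only [thetaTerm, ← Complex.exp_add] <;> exact congrArg cexp (by push_cast; ring)
    _ = 2 * theta00 (2*z) * theta10 (2*z) := by
        rw [theta00_eq, theta10_eq, ← tsum_mul_tsum_of_summable_norm snh' sn0',
          ← tsum_mul_tsum_of_summable_norm sn0' snh']
        ring

end doubling

theorem box_relations_theta (z w : ℂ) (hz : 0 < z.im) (hw : 0 < w.im) :
    let Z₁ := theta01 z * theta01 w
    let Z₂ := theta00 z * theta00 w
    let Z₃ := theta10 z * theta10 w
    let C := theta00 (2 * z) * theta00 (2 * w) + theta10 (2 * z) * theta10 (2 * w)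
    let W₁ := theta10 (2 * z) * theta00 (2 * w) + theta00 (2 * z) * theta10 (2 * w)
    let W₂ := I * (theta10 (2 * z) * theta00 (2 * w) - theta00 (2 * z) * theta10 (2 * w))
    let W₃ := theta00 (2 * z) * theta00 (2 * w) - theta10 (2 * z) * theta10 (2 * w)
    W₁ ^ 2 + W₂ ^ 2 = Z₃ ^ 2 ∧ W₁ ^ 2 + W₃ ^ 2 = Z₂ ^ 2 ∧ W₂ ^ 2 + W₃ ^ 2 = Z₁ ^ 2 ∧
      W₁ ^ 2 + W₂ ^ 2 + W₃ ^ 2 = C ^ 2 := by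
  intro Z₁ Z₂ Z₃ C W₁ W₂ W₃
  have hAz := theta00_sq hz
  have hAw := theta00_sq hw
  have hBz := theta01_sq hz
  have hBw := theta01_sq hw
  have hCz := theta10_sq hz
  have hCw := theta10_sq hw
  refine ⟨?_, ?_, ?_, ?_⟩
  · show (theta10 (2 * z) * theta00 (2 * w) + theta00 (2 * z) * theta10 (2 * w)) ^ 2 +
        (I * (theta10 (2 * z) * theta00 (2 * w) - theta00 (2 * z) * theta10 (2 * w))) ^ 2 =
        (theta10 z * theta10 w) ^ 2
    linear_combination (theta10 (2*z) * theta00 (2*w) - theta00 (2*z) * theta10 (2*w))^2 * I_sq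
      - theta10 w ^ 2 * hCz - (2 * theta00 (2*z) * theta10 (2*z)) * hCw
  · show (theta10 (2 * z) * theta00 (2 * w) + theta00 (2 * z) * theta10 (2 * w)) ^ 2 +
        (theta00 (2 * z) * theta00 (2 * w) - theta10 (2 * z) * theta10 (2 * w)) ^ 2 =
        (theta00 z * theta00 w) ^ 2
    linear_combination - theta00 w ^ 2 * hAz - (theta00 (2*z)^2 + theta10 (2*z)^2) * hAw
  · show (I * (theta10 (2 * z) * theta00 (2 * w) - theta00 (2 * z) * theta10 (2 * w))) ^ 2 +
        (theta00 (2 * z) * theta00 (2 * w) - theta10 (2 * z) * theta10 (2 * w)) ^ 2 =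
        (theta01 z * theta01 w) ^ 2
    linear_combination (theta10 (2*z) * theta00 (2*w) - theta00 (2*z) * theta10 (2*w))^2 * I_sq
      - theta01 w ^ 2 * hBz - (theta00 (2*z)^2 - theta10 (2*z)^2) * hBw
  · show (theta10 (2 * z) * theta00 (2 * w) + theta00 (2 * z) * theta10 (2 * w)) ^ 2 +
        (I * (theta10 (2 * z) * theta00 (2 * w) - theta00 (2 * z) * theta10 (2 * w))) ^ 2 +
        (theta00 (2 * z) * theta00 (2 * w) - theta10 (2 * z) * theta10 (2 * w)) ^ 2 =
        (theta00 (2 * z) * theta00 (2 * w) + theta10 (2 * z) * theta10 (2 * w)) ^ 2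
    linear_combination (theta10 (2*z) * theta00 (2*w) - theta00 (2*z) * theta10 (2*w))^2 * I_sq
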